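/- Let N be a positive natural number. Let R_t, R_B ∈ ℝ^{3N}, let m, s ∈ ℝ^{3N} have all entries strictly positive, and let S be a set of maps ℝ^{3N} → ℝ^{3N} (the admissible alignments). Let ρ_t ∈ S satisfy ρ_t(R_B) ≠ R_t and ‖R_t − ρ_t(R_B)‖ ≤ ‖R_t − ρ(R_B)‖ for all ρ ∈ S (ρ_t is an optimal alignment of R_B to R_t). Define the bias force b := diag(s)(ρ_t(R_B) − R_t), where diag(s) acts componentwise, and the updated position R'_{t+Δt} := R_t + Δt·(b/m) with b/m the componentwise quotient. Then there exists Δt > 0 such that for every ρ'_{t+Δt} ∈ S satisfying ‖R'_{t+Δt} − ρ'_{t+Δt}(R_B)‖ ≤ ‖R'_{t+Δt} − ρ(R_B)‖ for all ρ ∈ S (an optimal alignment of R_B to R'_{t+Δt}), the strict inequality ‖ρ'_{t+Δt}(R_B) − R'_{t+Δt}‖ < ‖ρ_t(R_B) − R_t‖ holds. -/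

import Mathlib

/-- Proposition of Appendix A.3: with the scale-based bias force, there exists
a small enough step size strictly decreasing the optimally-aligned distance to
the target configuration. -/
theorem scale_bias_step_decreases_aligned_distance (N : ℕ) (hN : 0 < N)
    (Rt RB : EuclideanSpace ℝ (Fin (3 * N)))
    (m s : Fin (3 * N) → ℝ) (hm : ∀ i, 0 < m i) (hs : ∀ i, 0 < s i)
    (S : Set (EuclideanSpace ℝ (Fin (3 * N)) → EuclideanSpace ℝ (Fin (3 * N))))
    (ρt : EuclideanSpace ℝ (Fin (3 * N)) → EuclideanSpace ℝ (Fin (3 * N)))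
    (hρt : ρt ∈ S) (hne : ρt RB ≠ Rt)
    (hopt : ∀ ρ ∈ S, ‖Rt - ρt RB‖ ≤ ‖Rt - ρ RB‖)
    (b : EuclideanSpace ℝ (Fin (3 * N)))
    (hb : ∀ i, b i = s i * (ρt RB i - Rt i))
    (R' : ℝ → EuclideanSpace ℝ (Fin (3 * N)))
    (hR' : ∀ Δt : ℝ, ∀ i, R' Δt i = Rt i + Δt * (b i / m i)) :
    ∃ Δt > (0 : ℝ), ∀ ρ' ∈ S,
      (∀ ρ ∈ S, ‖R' Δt - ρ' RB‖ ≤ ‖R' Δt - ρ RB‖) →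
      ‖ρ' RB - R' Δt‖ < ‖ρt RB - Rt‖ := by
  have h3N : 0 < 3 * N := by omega
  haveI : Nonempty (Fin (3 * N)) := ⟨⟨0, h3N⟩⟩
  set Δt : ℝ := Finset.univ.inf' Finset.univ_nonempty (fun i => m i / s i) with hΔ
  have hΔpos : 0 < Δt := by
    rw [hΔ, Finset.lt_inf'_iff]
    exact fun i _ => div_pos (hm i) (hs i)
  have hΔle : ∀ i, Δt ≤ m i / s i := fun i =>
    Finset.inf'_le _ (Finset.mem_univ i)
  have ht0 : ∀ i, 0 < Δt * s i / m i := fun i => div_pos (mul_pos hΔpos (hs i)) (hm i)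
  have ht1 : ∀ i, Δt * s i / m i ≤ 1 := by
    intro i
    rw [div_le_one (hm i)]
    calc Δt * s i ≤ (m i / s i) * s i :=
          mul_le_mul_of_nonneg_right (hΔle i) (hs i).le
      _ = m i := div_mul_cancel₀ _ (hs i).ne'
  have hcoord : ∀ i, (R' Δt - ρt RB) i =
      (Rt i - ρt RB i) * (1 - Δt * s i / m i) := by
    intro i
    have : (R' Δt - ρt RB) i = R' Δt i - ρt RB i := rfl
    rw [this, hR' Δt i, hb i]
    field_simp
    ring
  have hsq : ∀ i, ‖(R' Δt - ρt RB) i‖ ^ 2 ≤ ‖(Rt - ρt RB) i‖ ^ 2 := by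
    intro i
    have h2 : (Rt - ρt RB) i = Rt i - ρt RB i := rfl
    rw [hcoord i, h2, Real.norm_eq_abs, Real.norm_eq_abs, sq_abs, sq_abs,
      mul_pow]
    have hfac : (1 - Δt * s i / m i) ^ 2 ≤ 1 := by
      have h1 := ht0 i
      have h2 := ht1 i
      nlinarith
    nlinarith [sq_nonneg (Rt i - ρt RB i)]
  obtain ⟨j, hj⟩ : ∃ j, ρt RB j ≠ Rt j := by
    by_contra h
    push_neg at h
    exact hne (PiLp.ext h)
  have hkey : ‖R' Δt - ρt RB‖ < ‖Rt - ρt RB‖ := by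
    rw [EuclideanSpace.norm_eq, EuclideanSpace.norm_eq]
    apply Real.sqrt_lt_sqrt (by positivity)
    apply Finset.sum_lt_sum (fun i _ => hsq i) ⟨j, Finset.mem_univ j, ?_⟩
    have h2 : (Rt - ρt RB) j = Rt j - ρt RB j := rfl
    rw [hcoord j, h2, Real.norm_eq_abs, Real.norm_eq_abs, sq_abs, sq_abs,
      mul_pow]
    have hfac : (1 - Δt * s j / m j) ^ 2 < 1 := by
      have h1 := ht0 j
      have h2 := ht1 j
      nlinarith
    have hdj : 0 < (Rt j - ρt RB j) ^ 2 := by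
      have : Rt j - ρt RB j ≠ 0 := sub_ne_zero.mpr (fun h => hj h.symm)
      positivity
    nlinarith
  refine ⟨Δt, hΔpos, fun ρ' hρ' hopt' => ?_⟩
  calc ‖ρ' RB - R' Δt‖ = ‖R' Δt - ρ' RB‖ := norm_sub_rev _ _
    _ ≤ ‖R' Δt - ρt RB‖ := hopt' ρt hρt
    _ < ‖Rt - ρt RB‖ := hkey
    _ = ‖ρt RB - Rt‖ := norm_sub_rev _ _
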